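/- For every ε > 0 there exists n₀(ε) such that for all n ≥ n₀(ε), F₀₀₀₁(n) ≥ (n / (log n)^{2+ε})ⁿ. -/

import Mathlib

open scoped BigOperators

/-- A zero-one matrix (entries in `Bool`) with no zero rows and no zero columns. -/
def IsIncidence {k l : ℕ} (M : Matrix (Fin k) (Fin l) Bool) : Prop :=
  (∀ i, ∃ j, M i j = true) ∧ (∀ j, ∃ i, M i j = true)

/-- The number of entries equal to one in a zero-one matrix. -/
def numOnes {k l : ℕ} (M : Matrix (Fin k) (Fin l) Bool) : ℕ :=
  (Finset.univ.filter fun p : Fin k × Fin l => M p.1 p.2 = true).card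

/-- `F₁₁₁₁ n`: the number of incidence matrices (of any size) with exactly `n` ones. -/
noncomputable def F1111 (n : ℕ) : ℕ :=
  Nat.card {A : Σ k l : ℕ, Matrix (Fin k) (Fin l) Bool //
    IsIncidence A.2.2 ∧ numOnes A.2.2 = n}

noncomputable def mIJ (i j n : ℕ) : ℕ :=
  Nat.card {M : Matrix (Fin i) (Fin j) Bool // IsIncidence M ∧ numOnes M = n}

/-- total preorders on `Fin n` -/
noncomputable def numPreorders (n : ℕ) : ℕ :=
  Nat.card {R : Fin n → Fin n → Prop //
    (∀ x, R x x) ∧ (∀ x y z, R x y → R y z → R x z) ∧ (∀ x y, R x y ∨ x = y ∨ R y x)}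

noncomputable def numPreordersWithBlocks (n k : ℕ) : ℕ :=
  Nat.card {R : Fin n → Fin n → Prop //
    ((∀ x, R x x) ∧ (∀ x y z, R x y → R y z → R x z) ∧ (∀ x y, R x y ∨ x = y ∨ R y x)) ∧
    Nat.card (Quot fun x y => R x y ∧ R y x) = k}

noncomputable def S11 (n : ℕ) : ℕ :=
  Nat.card {A : Σ k : ℕ, Matrix (Fin k) (Fin k) Bool //
    (∀ i j, A.2 i j = A.2 j i) ∧ IsIncidence A.2 ∧ numOnes A.2 = n}

def trSigma : (Σ k l : ℕ, Matrix (Fin k) (Fin l) Bool) → (Σ k l : ℕ, Matrix (Fin k) (Fin l) Bool) :=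
  fun A => ⟨A.2.1, A.1, A.2.2.transpose⟩

noncomputable def Phi11 (n : ℕ) : ℕ :=
  Nat.card (Quot fun x y : {A : Σ k l : ℕ, Matrix (Fin k) (Fin l) Bool //
    IsIncidence A.2.2 ∧ numOnes A.2.2 = n} => trSigma x.1 = y.1)

noncomputable def F1011 (n : ℕ) : ℕ :=
  Nat.card {A : Σ k l : ℕ, Matrix (Fin k) (Fin l) Bool //
    IsIncidence A.2.2 ∧ numOnes A.2.2 = n ∧
    ∀ i i' : Fin A.1, (∀ j, A.2.2 i j = A.2.2 i' j) → i = i'}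

noncomputable def F0001 (n : ℕ) : ℕ :=
  Nat.card (Quot fun x y : {A : Σ k l : ℕ, Matrix (Fin k) (Fin l) Bool //
      IsIncidence A.2.2 ∧ numOnes A.2.2 = n ∧
      ∀ i i' : Fin A.1, (∀ j, A.2.2 i j = A.2.2 i' j) → i = i'} =>
    ∃ σ : Equiv.Perm (Fin x.1.1), ∃ τ : Equiv.Perm (Fin x.1.2.1),
      y.1 = ⟨x.1.1, x.1.2.1, Matrix.of fun i j => x.1.2.2 (σ i) (τ j)⟩)

noncomputable def numInvolutions (n : ℕ) : ℕ :=
  Nat.card {σ : Equiv.Perm (Fin n) // σ * σ = 1}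

/-- number of cycles of a permutation, counting fixed points as cycles -/
def numCycles {n : ℕ} (σ : Equiv.Perm (Fin n)) : ℕ :=
  Multiset.card σ.cycleType + (n - σ.support.card)

/-- unsigned Stirling number of the first kind: permutations of `n` with `k` cycles -/
noncomputable def stirling1Unsigned (n k : ℕ) : ℕ :=
  Nat.card {σ : Equiv.Perm (Fin n) // numCycles σ = k}

/-- Stirling number of the second kind: partitions of an `n`-set into `k` blocks -/
noncomputable def stirling2 (n k : ℕ) : ℕ :=
  Nat.card {c : Setoid (Fin n) // Nat.card (Quotient c) = k}

noncomputable def sSym (k n : ℕ) : ℕ :=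
  Nat.card {M : Matrix (Fin k) (Fin k) Bool // (∀ a b, M a b = M b a) ∧ numOnes M = n}

noncomputable def muSym (i n : ℕ) : ℕ :=
  Nat.card {M : Matrix (Fin i) (Fin i) Bool //
    (∀ a b, M a b = M b a) ∧ IsIncidence M ∧ numOnes M = n}

/-- The basic matrix family: identity block, full last row on right block,
free content `S` in the right block. -/
def MS (v : ℕ) (S : Finset (Fin v × Fin v)) : Matrix (Fin (v+1)) (Fin (v+v)) Bool :=
  Matrix.of fun i j =>
    if hi : (i : ℕ) < v then
      if hj : (j : ℕ) < v then decide ((i : ℕ) = (j : ℕ))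
      else decide ((⟨(i : ℕ), hi⟩, ⟨(j : ℕ) - v, by have := j.isLt; omega⟩) ∈ S)
    else
      decide (v ≤ (j : ℕ))

lemma MS_eq_true_iff (v : ℕ) (S : Finset (Fin v × Fin v)) (i : Fin (v+1)) (j : Fin (v+v)) :
    MS v S i j = true ↔
      (∃ a : Fin v, i = Fin.castSucc a ∧ j = Fin.castAdd v a) ∨
      (∃ b : Fin v, i = Fin.last v ∧ j = Fin.natAdd v b) ∨
      (∃ p : Fin v × Fin v, p ∈ S ∧ i = Fin.castSucc p.1 ∧ j = Fin.natAdd v p.2) := by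
  have hj2 := j.isLt
  have hi2 := i.isLt
  unfold MS
  simp only [Matrix.of_apply]
  split_ifs with hi hj
  · simp only [decide_eq_true_eq]
    constructor
    · intro h
      exact Or.inl ⟨⟨(i : ℕ), hi⟩, by ext; simp, by ext; simp [h.symm]⟩
    · rintro (⟨a, rfl, rfl⟩ | ⟨b, rfl, rfl⟩ | ⟨p, hp, rfl, rfl⟩)
      · simp
      · simp at hi
      · simp at hj
  · simp only [decide_eq_true_eq]
    constructor
    · intro h
      refine Or.inr (Or.inr ⟨(⟨(i : ℕ), hi⟩, ⟨(j : ℕ) - v, by omega⟩), h, by ext; simp, by ext; simp; omega⟩)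
    · rintro (⟨a, rfl, rfl⟩ | ⟨b, rfl, rfl⟩ | ⟨p, hp, rfl, rfl⟩)
      · simp [a.isLt] at hj
      · simp at hi
      · convert hp using 2
        all_goals ext
        all_goals simp
        all_goals omega
  · simp only [decide_eq_true_eq]
    have hiv : (i : ℕ) = v := by omega
    constructor
    · intro h
      exact Or.inr (Or.inl ⟨⟨(j : ℕ) - v, by omega⟩, by ext; simp [hiv], by ext; simp; omega⟩)
    · rintro (⟨a, rfl, rfl⟩ | ⟨b, rfl, rfl⟩ | ⟨p, hp, rfl, rfl⟩)
      · simp [a.isLt] at hi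
      · simp
      · simp [p.1.isLt] at hi

lemma MS_mem_iff (v : ℕ) (S : Finset (Fin v × Fin v)) (a b : Fin v) :
    MS v S (Fin.castSucc a) (Fin.natAdd v b) = true ↔ (a, b) ∈ S := by
  rw [MS_eq_true_iff]
  constructor
  · rintro (⟨a', ha, hj⟩ | ⟨b', ha, hj⟩ | ⟨p, hp, ha, hj⟩)
    · exfalso
      have := congrArg Fin.val hj
      simp at this
      omega
    · exfalso
      have := congrArg Fin.val ha
      simp at this
      omega
    · have h1 : a = p.1 := Fin.castSucc_injective _ ha
      have h2 : b = p.2 := by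
        have := congrArg Fin.val hj
        simp at this
        exact Fin.ext this
      rw [h1, h2]
      exact hp
  · intro h
    exact Or.inr (Or.inr ⟨(a, b), h, rfl, rfl⟩)

lemma numOnes_MS (v : ℕ) (S : Finset (Fin v × Fin v)) :
    numOnes (MS v S) = v + v + S.card := by
  classical
  unfold numOnes
  have hset : (Finset.univ.filter fun p : Fin (v+1) × Fin (v+v) => MS v S p.1 p.2 = true)
      = (((Finset.univ : Finset (Fin v)).image fun a => (Fin.castSucc a, Fin.castAdd v a))
        ∪ ((Finset.univ : Finset (Fin v)).image fun b => (Fin.last v, Fin.natAdd v b)))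
        ∪ (S.image fun p => (Fin.castSucc p.1, Fin.natAdd v p.2)) := by
    ext ⟨i, j⟩
    simp only [Finset.mem_filter, Finset.mem_union, Finset.mem_image, Finset.mem_univ, true_and,
      MS_eq_true_iff, Prod.mk.injEq]
    constructor
    · rintro (⟨a, h1, h2⟩ | ⟨b, h1, h2⟩ | ⟨p, hp, h1, h2⟩)
      · exact Or.inl (Or.inl ⟨a, h1.symm, h2.symm⟩)
      · exact Or.inl (Or.inr ⟨b, h1.symm, h2.symm⟩)
      · exact Or.inr ⟨p, hp, h1.symm, h2.symm⟩
    · rintro ((⟨a, h1, h2⟩ | ⟨b, h1, h2⟩) | ⟨p, hp, h1, h2⟩)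
      · exact Or.inl ⟨a, h1.symm, h2.symm⟩
      · exact Or.inr (Or.inl ⟨b, h1.symm, h2.symm⟩)
      · exact Or.inr (Or.inr ⟨p, hp, h1.symm, h2.symm⟩)
  rw [hset]
  rw [Finset.card_union_of_disjoint, Finset.card_union_of_disjoint]
  · rw [Finset.card_image_of_injective, Finset.card_image_of_injective,
      Finset.card_image_of_injective]
    · simp
    · intro p q h
      have h1 := congrArg Prod.fst h
      have h2 := congrArg Prod.snd h
      simp only at h1 h2
      exact Prod.ext (Fin.castSucc_injective _ h1)
        (by have := congrArg Fin.val h2; simp at this; exact Fin.ext this)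
    · intro a b h
      have h2 := congrArg Prod.snd h
      simp only at h2
      have := congrArg Fin.val h2
      simp at this
      exact Fin.ext this
    · intro a b h
      exact Fin.castSucc_injective _ (congrArg Prod.fst h)
  · -- disjoint: (D) and (R)
    rw [Finset.disjoint_left]
    rintro ⟨i, j⟩ h1 h2
    simp only [Finset.mem_image, Finset.mem_univ, true_and, Prod.mk.injEq] at h1 h2
    obtain ⟨a, ha, -⟩ := h1
    obtain ⟨b, hb, -⟩ := h2
    have := congrArg Fin.val (ha.trans hb.symm)
    simp at this
    have := a.isLt
    omega
  · -- disjoint: (D ∪ R) and (Free)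
    rw [Finset.disjoint_left]
    rintro ⟨i, j⟩ h1 h2
    simp only [Finset.mem_union, Finset.mem_image, Finset.mem_univ, true_and,
      Prod.mk.injEq] at h1 h2
    obtain ⟨p, -, hpi, hpj⟩ := h2
    rcases h1 with ⟨a, -, hj'⟩ | ⟨b, hb, -⟩
    · have := congrArg Fin.val (hj'.trans hpj.symm)
      simp at this
      have := a.isLt
      have := p.2.isLt
      omega
    · have e1 := congrArg Fin.val (hb.trans hpi.symm)
      simp at e1
      have := p.1.isLt
      omega

lemma isIncidence_MS (v : ℕ) (hv : 1 ≤ v) (S : Finset (Fin v × Fin v)) :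
    IsIncidence (MS v S) := by
  constructor
  · intro i
    by_cases hi : (i : ℕ) < v
    · refine ⟨Fin.castAdd v ⟨(i : ℕ), hi⟩, (MS_eq_true_iff v S _ _).mpr ?_⟩
      exact Or.inl ⟨⟨(i : ℕ), hi⟩, by ext; simp, rfl⟩
    · refine ⟨Fin.natAdd v ⟨0, hv⟩, (MS_eq_true_iff v S _ _).mpr ?_⟩
      refine Or.inr (Or.inl ⟨⟨0, hv⟩, by ext; simp; have := i.isLt; omega, rfl⟩)
  · intro j
    by_cases hj : (j : ℕ) < v
    · refine ⟨Fin.castSucc ⟨(j : ℕ), hj⟩, (MS_eq_true_iff v S _ _).mpr ?_⟩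
      exact Or.inl ⟨⟨(j : ℕ), hj⟩, rfl, by ext; simp⟩
    · refine ⟨Fin.last v, (MS_eq_true_iff v S _ _).mpr ?_⟩
      refine Or.inr (Or.inl ⟨⟨(j : ℕ) - v, by have := j.isLt; omega⟩, rfl, by ext; simp; omega⟩)

lemma rows_distinct_MS (v : ℕ) (S : Finset (Fin v × Fin v)) :
    ∀ i i' : Fin (v+1), (∀ j, MS v S i j = MS v S i' j) → i = i' := by
  have key : ∀ i i' : Fin (v+1), (i : ℕ) < v → (∀ j, MS v S i j = MS v S i' j) → i = i' := by
    intro i i' hi h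
    have h1 : MS v S i (Fin.castAdd v ⟨(i : ℕ), hi⟩) = true :=
      (MS_eq_true_iff v S _ _).mpr (Or.inl ⟨⟨(i : ℕ), hi⟩, by ext; simp, rfl⟩)
    have h2 : MS v S i' (Fin.castAdd v ⟨(i : ℕ), hi⟩) = true := (h _).symm.trans h1
    rcases (MS_eq_true_iff v S _ _).mp h2 with ⟨a, ha, hj⟩ | ⟨b, hb, hj⟩ | ⟨p, hp, ha, hj⟩
    · have e := congrArg Fin.val hj
      simp at e
      rw [ha]
      ext
      simp [e]
    · have e := congrArg Fin.val hj
      simp at e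
      have := b.isLt
      omega
    · have e := congrArg Fin.val hj
      simp at e
      have := p.2.isLt
      omega
  intro i i' h
  by_cases hi : (i : ℕ) < v
  · exact key i i' hi h
  · by_cases hi' : (i' : ℕ) < v
    · exact (key i' i hi' fun j => (h j).symm).symm
    · ext
      have := i.isLt
      have := i'.isLt
      omega

lemma MS_inj (v : ℕ) {S S' : Finset (Fin v × Fin v)} (h : MS v S = MS v S') : S = S' := by
  ext ⟨a, b⟩
  rw [← MS_mem_iff v S a b, ← MS_mem_iff v S' a b, h]

lemma rows_le_numOnes {k l : ℕ} {M : Matrix (Fin k) (Fin l) Bool}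
    (h : ∀ i, ∃ j, M i j = true) : k ≤ numOnes M := by
  classical
  have : ∀ i : Fin k, (i, (h i).choose) ∈
      (Finset.univ.filter fun p : Fin k × Fin l => M p.1 p.2 = true) := by
    intro i
    simp [Finset.mem_filter, (h i).choose_spec]
  calc k = (Finset.univ : Finset (Fin k)).card := by simp
    _ ≤ _ := Finset.card_le_card_of_injOn (fun i => (i, (h i).choose))
        (fun i _ => this i) (fun a _ b _ hab => congrArg Prod.fst hab)

lemma cols_le_numOnes {k l : ℕ} {M : Matrix (Fin k) (Fin l) Bool}
    (h : ∀ j, ∃ i, M i j = true) : l ≤ numOnes M := by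
  classical
  have : ∀ j : Fin l, ((h j).choose, j) ∈
      (Finset.univ.filter fun p : Fin k × Fin l => M p.1 p.2 = true) := by
    intro j
    simp [Finset.mem_filter, (h j).choose_spec]
  calc l = (Finset.univ : Finset (Fin l)).card := by simp
    _ ≤ _ := Finset.card_le_card_of_injOn (fun j => ((h j).choose, j))
        (fun j _ => this j) (fun a _ b _ hab => congrArg Prod.snd hab)

lemma finite_T (n : ℕ) : Finite {A : Σ k l : ℕ, Matrix (Fin k) (Fin l) Bool //
    IsIncidence A.2.2 ∧ numOnes A.2.2 = n ∧
    ∀ i i' : Fin A.1, (∀ j, A.2.2 i j = A.2.2 i' j) → i = i'} := by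
  classical
  have hbound : ∀ A : {A : Σ k l : ℕ, Matrix (Fin k) (Fin l) Bool //
      IsIncidence A.2.2 ∧ numOnes A.2.2 = n ∧
      ∀ i i' : Fin A.1, (∀ j, A.2.2 i j = A.2.2 i' j) → i = i'},
      A.1.1 < n + 1 ∧ A.1.2.1 < n + 1 := by
    intro A
    have h1 := rows_le_numOnes A.2.1.1
    have h2 := cols_le_numOnes A.2.1.2
    rw [A.2.2.1] at h1 h2
    omega
  set T := {A : Σ k l : ℕ, Matrix (Fin k) (Fin l) Bool //
      IsIncidence A.2.2 ∧ numOnes A.2.2 = n ∧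
      ∀ i i' : Fin A.1, (∀ j, A.2.2 i j = A.2.2 i' j) → i = i'}
  let F : T → Fin (n+1) × Fin (n+1) × (Fin (n+1) → Fin (n+1) → Bool) := fun A =>
    (⟨A.1.1, (hbound A).1⟩, ⟨A.1.2.1, (hbound A).2⟩,
      fun i j => if h : (i : ℕ) < A.1.1 ∧ (j : ℕ) < A.1.2.1
        then A.1.2.2 ⟨(i : ℕ), h.1⟩ ⟨(j : ℕ), h.2⟩ else false)
  refine Finite.of_injective F ?_
  rintro ⟨⟨k, l, M⟩, hA⟩ ⟨⟨k', l', M'⟩, hA'⟩ h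
  have h1 : k = k' := by
    have := congrArg (fun p => (p.1 : ℕ)) h
    simpa using this
  subst h1
  have h2 : l = l' := by
    have := congrArg (fun p => (p.2.1 : ℕ)) h
    simpa using this
  subst h2
  have h3 := congrArg (fun p => p.2.2) h
  simp only [F] at h3
  have hM : M = M' := by
    ext i j
    have hk : k ≤ n := by
      have := rows_le_numOnes hA.1.1
      rwa [hA.2.1] at this
    have hl : l ≤ n := by
      have := cols_le_numOnes hA.1.2
      rwa [hA.2.1] at this
    have hik : (i : ℕ) < n + 1 := by have := i.isLt; omega
    have hjl : (j : ℕ) < n + 1 := by have := j.isLt; omega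
    have := congrFun (congrFun h3 ⟨(i : ℕ), hik⟩) ⟨(j : ℕ), hjl⟩
    simp only at this
    rw [dif_pos ⟨by simpa using i.isLt, by simpa using j.isLt⟩,
        dif_pos ⟨by simpa using i.isLt, by simpa using j.isLt⟩] at this
    simpa using this
  subst hM
  rfl

def permRel : (Σ k l : ℕ, Matrix (Fin k) (Fin l) Bool) →
    (Σ k l : ℕ, Matrix (Fin k) (Fin l) Bool) → Prop := fun x y =>
  ∃ σ : Equiv.Perm (Fin x.1), ∃ τ : Equiv.Perm (Fin x.2.1),
    y = ⟨x.1, x.2.1, Matrix.of fun i j => x.2.2 (σ i) (τ j)⟩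

lemma permRel_equivalence : Equivalence permRel := by
  constructor
  · rintro ⟨k, l, M⟩
    exact ⟨1, 1, rfl⟩
  · rintro ⟨k, l, M⟩ y ⟨σ, τ, rfl⟩
    refine ⟨σ⁻¹, τ⁻¹, ?_⟩
    have hM : (Matrix.of fun i j =>
        (Matrix.of fun i j => M (σ i) (τ j)) (σ⁻¹ i) (τ⁻¹ j)) = M := by
      ext i j
      simp
    rw [hM]
  · rintro ⟨k, l, M⟩ y z ⟨σ, τ, rfl⟩ ⟨σ', τ', rfl⟩
    refine ⟨σ * σ', τ * τ', ?_⟩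
    have hM : (Matrix.of fun i j =>
        (Matrix.of fun i j => M (σ i) (τ j)) (σ' i) (τ' j)) =
        (Matrix.of fun i j => M ((σ * σ') i) ((τ * τ') j)) := by
      ext i j
      simp [Equiv.Perm.mul_apply]
    rw [hM]

def mkT (v n : ℕ) (hv : 1 ≤ v) (S : Finset (Fin v × Fin v)) (hS : v + v + S.card = n) :
    {A : Σ k l : ℕ, Matrix (Fin k) (Fin l) Bool //
      IsIncidence A.2.2 ∧ numOnes A.2.2 = n ∧
      ∀ i i' : Fin A.1, (∀ j, A.2.2 i j = A.2.2 i' j) → i = i'} :=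
  ⟨⟨v+1, v+v, MS v S⟩, isIncidence_MS v hv S,
    by show numOnes (MS v S) = n; rw [numOnes_MS]; exact hS,
    rows_distinct_MS v S⟩

@[simp] lemma mkT_coe (v n : ℕ) (hv : 1 ≤ v) (S : Finset (Fin v × Fin v))
    (hS : v + v + S.card = n) :
    (mkT v n hv S hS).1 = ⟨v+1, v+v, MS v S⟩ := rfl

theorem key_count (v t : ℕ) (hv : 1 ≤ v) :
    (v * v).choose t ≤ (v+1).factorial * ((v+v).factorial * F0001 (v+v+t)) := by
  classical
  set n := v + v + t with hn
  by_cases ht : t ≤ v * v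
  swap
  · rw [Nat.choose_eq_zero_of_lt (by omega)]
    exact Nat.zero_le _
  set T := {A : Σ k l : ℕ, Matrix (Fin k) (Fin l) Bool //
      IsIncidence A.2.2 ∧ numOnes A.2.2 = n ∧
      ∀ i i' : Fin A.1, (∀ j, A.2.2 i j = A.2.2 i' j) → i = i'} with hT
  haveI : Finite T := finite_T n
  set rel : T → T → Prop := fun x y =>
    ∃ σ : Equiv.Perm (Fin x.1.1), ∃ τ : Equiv.Perm (Fin x.1.2.1),
      y.1 = ⟨x.1.1, x.1.2.1, Matrix.of fun i j => x.1.2.2 (σ i) (τ j)⟩ with hrel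
  have hequiv : Equivalence rel :=
    ⟨fun x => permRel_equivalence.refl x.1, fun h => permRel_equivalence.symm h,
      fun h h' => permRel_equivalence.trans h h'⟩
  set Q := Quot rel with hQ
  haveI : Finite Q := Quot.finite rel
  letI : Fintype Q := Fintype.ofFinite Q
  have hF : F0001 n = Nat.card Q := rfl
  -- the family
  set s : Finset (Finset (Fin v × Fin v)) := Finset.powersetCard t Finset.univ with hsdef
  have hmem : ∀ S ∈ s, v + v + S.card = n := by
    intro S hS
    rw [Finset.mem_powersetCard_univ.mp hS]
  let f : {S // S ∈ s} → Q := fun S => Quot.mk rel (mkT v n hv S.1 (hmem S.1 S.2))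
  have hfib : ∀ b ∈ s.attach.image f,
      (s.attach.filter fun a => f a = b).card ≤ (v+1).factorial * (v+v).factorial := by
    intro b hb
    obtain ⟨a₀, -, rfl⟩ := Finset.mem_image.mp hb
    have hPa : ∀ a ∈ s.attach.filter fun a => f a = f a₀,
        ∃ p : Equiv.Perm (Fin (v+1)) × Equiv.Perm (Fin (v+v)),
          MS v a.1 = Matrix.of fun i j => MS v a₀.1 (p.1 i) (p.2 j) := by
      intro a ha
      have hfa : f a = f a₀ := (Finset.mem_filter.mp ha).2
      have h1 : Relation.EqvGen rel (mkT v n hv a.1 (hmem a.1 a.2))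
          (mkT v n hv a₀.1 (hmem a₀.1 a₀.2)) := Quot.eq.mp hfa
      have h2 : rel (mkT v n hv a₀.1 (hmem a₀.1 a₀.2)) (mkT v n hv a.1 (hmem a.1 a.2)) :=
        hequiv.symm (hequiv.eqvGen_iff.mp h1)
      obtain ⟨σ, τ, hmat⟩ := h2
      refine ⟨(σ, τ), ?_⟩
      simp only [mkT_coe] at hmat
      simp at hmat; exact hmat
    classical
    set g : {S // S ∈ s} → Equiv.Perm (Fin (v+1)) × Equiv.Perm (Fin (v+v)) := fun a =>
      if h : ∃ p : Equiv.Perm (Fin (v+1)) × Equiv.Perm (Fin (v+v)),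
          MS v a.1 = Matrix.of fun i j => MS v a₀.1 (p.1 i) (p.2 j)
        then h.choose else 1 with hg
    have hspec : ∀ a ∈ s.attach.filter fun a => f a = f a₀,
        MS v a.1 = Matrix.of fun i j => MS v a₀.1 ((g a).1 i) ((g a).2 j) := by
      intro a ha
      have hp := hPa a ha
      simp only [hg, dif_pos hp]
      exact hp.choose_spec
    have hcardle : (s.attach.filter fun a => f a = f a₀).card ≤
        Fintype.card (Equiv.Perm (Fin (v+1)) × Equiv.Perm (Fin (v+v))) := by
      rw [← Finset.card_univ]
      refine Finset.card_le_card_of_injOn g (fun a _ => Finset.mem_univ _) ?_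
      intro a₁ h₁ a₂ h₂ hgeq
      have e₁ := hspec a₁ h₁
      have e₂ := hspec a₂ h₂
      rw [hgeq] at e₁
      exact Subtype.ext (MS_inj v (e₁.trans e₂.symm))
    calc (s.attach.filter fun a => f a = f a₀).card
        ≤ Fintype.card (Equiv.Perm (Fin (v+1)) × Equiv.Perm (Fin (v+v))) := hcardle
      _ = (v+1).factorial * (v+v).factorial := by
          simp [Fintype.card_perm]
  have main := Finset.card_le_mul_card_image s.attach
    ((v+1).factorial * (v+v).factorial) hfib
  have h1 : s.attach.card = (v*v).choose t := by
    rw [Finset.card_attach, hsdef, Finset.card_powersetCard]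
    simp
  have h2 : (s.attach.image f).card ≤ Nat.card Q := by
    rw [Nat.card_eq_fintype_card]
    exact Finset.card_le_univ _
  calc (v*v).choose t = s.attach.card := h1.symm
    _ ≤ (v+1).factorial * (v+v).factorial * (s.attach.image f).card := main
    _ ≤ (v+1).factorial * (v+v).factorial * Nat.card Q := Nat.mul_le_mul_left _ h2
    _ = (v+1).factorial * ((v+v).factorial * F0001 n) := by rw [hF]; ring

lemma estimate (ε δ c : ℝ) (n v t : ℕ)
    (hε : 0 < ε) (hδpos : 0 < δ) (hc : 0 < c) (hcdef : c = Real.log 2 - 2*Real.log δ)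
    (hv1 : 1 ≤ v) (hvvt : v + v + t = n) (htvv : t ≤ v*v) (ht1 : 1 ≤ t)
    (hN8 : (8:ℝ) ≤ (n:ℝ)) (hl1 : 1 ≤ Real.log (n:ℝ))
    (hm1 : 1 ≤ Real.log (Real.log (n:ℝ)))
    (hlogV : Real.log (n:ℝ) - Real.log (Real.log (n:ℝ)) + Real.log δ ≤ Real.log (v:ℝ))
    (hVN : (v:ℝ) ≤ (n:ℝ)/4)
    (hV2 : 2*(n:ℝ) ≤ (v:ℝ)*(v:ℝ))
    (hT : (t:ℝ) = (n:ℝ) - 2*(v:ℝ))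
    (hkey : 6*(v:ℝ)*Real.log (n:ℝ) + c*(n:ℝ) ≤ ε*(n:ℝ)*Real.log (Real.log (n:ℝ)))
    (hlmc : 0 ≤ Real.log (n:ℝ) - 2*Real.log (Real.log (n:ℝ)) - c) :
    ((n : ℝ) / Real.log (n:ℝ) ^ ((2 : ℝ) + ε)) ^ n ≤ (F0001 n : ℝ) := by
  set l : ℝ := Real.log (n:ℝ) with hldef
  set m : ℝ := Real.log l with hmdef
  have hNpos : (0:ℝ) < (n:ℝ) := by linarith
  have hlpos : (0:ℝ) < l := by linarith
  have hmpos : (0:ℝ) < m := by linarith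
  have hV1 : (1:ℝ) ≤ (v:ℝ) := by exact_mod_cast hv1
  have hVpos : (0:ℝ) < (v:ℝ) := by linarith
  have hT2 : (n:ℝ)/2 ≤ (t:ℝ) := by rw [hT]; linarith
  have hTpos : (0:ℝ) < (t:ℝ) := by linarith
  have hTleN : (t:ℝ) ≤ (n:ℝ) := by rw [hT]; linarith
  -- R := v*v + 1 - t
  have htvv1 : t ≤ v*v + 1 := by omega
  have hRval : ((v*v + 1 - t : ℕ) : ℝ) = (v:ℝ)*(v:ℝ) + 1 - (t:ℝ) := by
    rw [Nat.cast_sub htvv1]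
    push_cast
    ring
  have hRge : (v:ℝ)*(v:ℝ)/2 ≤ ((v*v + 1 - t : ℕ) : ℝ) := by
    rw [hRval]; linarith
  have hRpos : (0:ℝ) < ((v*v + 1 - t : ℕ) : ℝ) := by nlinarith
  have hlogR : 2*l - 2*m - c ≤ Real.log ((v*v + 1 - t : ℕ) : ℝ) := by
    have hx : Real.log ((v:ℝ)*(v:ℝ)/2) ≤ Real.log ((v*v + 1 - t : ℕ) : ℝ) :=
      (Real.log_le_log_iff (by positivity) hRpos).mpr hRge
    have hy : Real.log ((v:ℝ)*(v:ℝ)/2) = 2*Real.log (v:ℝ) - Real.log 2 := by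
      rw [Real.log_div (by positivity) (by norm_num),
        Real.log_mul (ne_of_gt hVpos) (ne_of_gt hVpos)]
      ring
    rw [hcdef]
    linarith [hlogV]
  -- binomial lower bound
  have hchoose_nat : (v*v + 1 - t)^t ≤ t^t * ((v*v).choose t) := by
    calc (v*v + 1 - t)^t ≤ (v*v).descFactorial t := Nat.pow_sub_le_descFactorial (v*v) t
      _ = t.factorial * (v*v).choose t := Nat.descFactorial_eq_factorial_mul_choose _ _
      _ ≤ t^t * (v*v).choose t := Nat.mul_le_mul_right _ (Nat.factorial_le_pow t)
  have hchoose : ((v*v + 1 - t : ℕ) : ℝ)^t ≤ (t:ℝ)^t * ((v*v).choose t : ℝ) := by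
    exact_mod_cast hchoose_nat
  have hCpos : (0:ℝ) < ((v*v).choose t : ℝ) := by exact_mod_cast Nat.choose_pos htvv
  have hlogt : Real.log (t:ℝ) ≤ l := (Real.log_le_log_iff hTpos hNpos).mpr hTleN
  have hlogC : (t:ℝ)*(2*l-2*m-c) - (t:ℝ)*l ≤ Real.log ((v*v).choose t : ℝ) := by
    have h1 : Real.log (((v*v + 1 - t : ℕ) : ℝ)^t) ≤
        Real.log ((t:ℝ)^t * ((v*v).choose t : ℝ)) :=
      (Real.log_le_log_iff (by positivity) (by positivity)).mpr hchoose
    rw [Real.log_pow, Real.log_mul (by positivity) (ne_of_gt hCpos), Real.log_pow] at h1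
    have h2 : (t:ℝ)*(2*l-2*m-c) ≤ (t:ℝ)*Real.log ((v*v + 1 - t : ℕ) : ℝ) :=
      mul_le_mul_of_nonneg_left hlogR (le_of_lt hTpos)
    have h3 : (t:ℝ)*Real.log (t:ℝ) ≤ (t:ℝ)*l :=
      mul_le_mul_of_nonneg_left hlogt (le_of_lt hTpos)
    linarith
  -- factorial upper bounds
  have hfac1 : Real.log ((v+1).factorial : ℝ) ≤ 2*(v:ℝ)*l := by
    have hle : (((v+1).factorial : ℕ) : ℝ) ≤ ((v+1 : ℕ) : ℝ)^(v+1) := by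
      exact_mod_cast Nat.factorial_le_pow (v+1)
    have h1 : Real.log ((v+1).factorial : ℝ) ≤ Real.log (((v+1 : ℕ) : ℝ)^(v+1)) :=
      (Real.log_le_log_iff (by exact_mod_cast (v+1).factorial_pos) (by positivity)).mpr hle
    rw [Real.log_pow] at h1
    have hcast : ((v+1 : ℕ) : ℝ) = (v:ℝ) + 1 := by push_cast; ring
    rw [hcast] at h1
    have hvn : (v:ℝ) + 1 ≤ (n:ℝ) := by linarith
    have h2 : Real.log ((v:ℝ)+1) ≤ l := (Real.log_le_log_iff (by linarith) hNpos).mpr hvn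
    have h3 : 0 ≤ Real.log ((v:ℝ)+1) := Real.log_nonneg (by linarith)
    have h4 : ((v:ℝ) + 1) * Real.log ((v:ℝ)+1) ≤ (2*(v:ℝ)) * l := by
      apply mul_le_mul (by linarith) h2 h3 (by linarith)
    linarith
  have hfac2 : Real.log ((v+v).factorial : ℝ) ≤ 2*(v:ℝ)*l := by
    have hle : (((v+v).factorial : ℕ) : ℝ) ≤ ((v+v : ℕ) : ℝ)^(v+v) := by
      exact_mod_cast Nat.factorial_le_pow (v+v)
    have h1 : Real.log ((v+v).factorial : ℝ) ≤ Real.log (((v+v : ℕ) : ℝ)^(v+v)) :=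
      (Real.log_le_log_iff (by exact_mod_cast (v+v).factorial_pos) (by positivity)).mpr hle
    rw [Real.log_pow] at h1
    have hcast : ((v+v : ℕ) : ℝ) = 2*(v:ℝ) := by push_cast; ring
    rw [hcast] at h1
    have hvn : 2*(v:ℝ) ≤ (n:ℝ) := by linarith
    have h2 : Real.log (2*(v:ℝ)) ≤ l := (Real.log_le_log_iff (by linarith) hNpos).mpr hvn
    have h3 : 0 ≤ Real.log (2*(v:ℝ)) := Real.log_nonneg (by linarith)
    have h4 : (2*(v:ℝ)) * Real.log (2*(v:ℝ)) ≤ (2*(v:ℝ)) * l := by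
      apply mul_le_mul (by linarith) h2 h3 (by linarith)
    linarith
  -- assemble
  have hYpos : (0:ℝ) < (n:ℝ) / l ^ ((2:ℝ)+ε) :=
    div_pos hNpos (Real.rpow_pos_of_pos hlpos _)
  have hlogY : Real.log ((n:ℝ) / l ^ ((2:ℝ)+ε)) = l - (2+ε)*m := by
    rw [Real.log_div (ne_of_gt hNpos) (ne_of_gt (Real.rpow_pos_of_pos hlpos _)),
      Real.log_rpow hlpos]
  have hfacpos1 : (0:ℝ) < ((v+1).factorial : ℝ) := by exact_mod_cast (v+1).factorial_pos
  have hfacpos2 : (0:ℝ) < ((v+v).factorial : ℝ) := by exact_mod_cast (v+v).factorial_pos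
  have hstep : (n:ℝ)*(l - (2+ε)*m) + 2*(v:ℝ)*l + 2*(v:ℝ)*l ≤
      (t:ℝ)*(2*l-2*m-c) - (t:ℝ)*l := by
    have e1 : (t:ℝ)*(2*l-2*m-c) - (t:ℝ)*l =
        (n:ℝ)*(l-2*m-c) - 2*((v:ℝ)*(l-2*m-c)) := by rw [hT]; ring
    have e2 : 0 ≤ (v:ℝ)*(2*m+c) := by
      apply mul_nonneg (by linarith)
      linarith
    rw [e1]
    linarith [hkey, e2]
  have hmain : Real.log (((n:ℝ) / l ^ ((2:ℝ)+ε)) ^ n *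
      (((v+1).factorial : ℝ) * ((v+v).factorial : ℝ))) ≤
      Real.log ((v*v).choose t : ℝ) := by
    rw [Real.log_mul (by positivity) (by positivity),
      Real.log_mul (ne_of_gt hfacpos1) (ne_of_gt hfacpos2), Real.log_pow, hlogY]
    calc (n:ℝ) * (l - (2+ε)*m) + (Real.log ((v+1).factorial : ℝ)
          + Real.log ((v+v).factorial : ℝ))
        ≤ (n:ℝ)*(l - (2+ε)*m) + 2*(v:ℝ)*l + 2*(v:ℝ)*l := by linarith
      _ ≤ (t:ℝ)*(2*l-2*m-c) - (t:ℝ)*l := hstep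
      _ ≤ Real.log ((v*v).choose t : ℝ) := hlogC
  have hfinal1 : ((n:ℝ) / l ^ ((2:ℝ)+ε)) ^ n *
      (((v+1).factorial : ℝ) * ((v+v).factorial : ℝ)) ≤ ((v*v).choose t : ℝ) :=
    (Real.log_le_log_iff (by positivity) hCpos).mp hmain
  have hkc := key_count v t hv1
  rw [hvvt] at hkc
  have hkcR : ((v*v).choose t : ℝ) ≤
      ((v+1).factorial : ℝ) * (((v+v).factorial : ℝ) * (F0001 n : ℝ)) := by
    exact_mod_cast hkc
  have hffpos : (0:ℝ) < ((v+1).factorial : ℝ) * ((v+v).factorial : ℝ) :=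
    mul_pos hfacpos1 hfacpos2
  have hlast : ((n:ℝ) / l ^ ((2:ℝ)+ε)) ^ n *
      (((v+1).factorial : ℝ) * ((v+v).factorial : ℝ)) ≤
      (F0001 n : ℝ) * (((v+1).factorial : ℝ) * ((v+v).factorial : ℝ)) := by
    calc ((n:ℝ) / l ^ ((2:ℝ)+ε)) ^ n * (((v+1).factorial : ℝ) * ((v+v).factorial : ℝ))
        ≤ ((v*v).choose t : ℝ) := hfinal1
      _ ≤ ((v+1).factorial : ℝ) * (((v+v).factorial : ℝ) * (F0001 n : ℝ)) := hkcR
      _ = (F0001 n : ℝ) * (((v+1).factorial : ℝ) * ((v+v).factorial : ℝ)) := by ring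
  exact le_of_mul_le_mul_right hlast hffpos

lemma pointwise (ε δ c : ℝ) (hε : 0 < ε) (hδpos : 0 < δ) (hδhalf : δ ≤ 1/2)
    (hδε : δ ≤ ε/16) (hcdef : c = Real.log 2 - 2 * Real.log δ) (hc : 0 < c) (n : ℕ)
    (h1 : 8 ≤ n) (h2 : 64 ≤ Real.log n)
    (h3 : max 1 (max (1/δ) (2*c/ε)) ≤ Real.log (Real.log n))
    (h4 : Real.log n ^ 2 / (n : ℝ) ≤ δ^2/2) (h5 : Real.log n ^ 2 / (n : ℝ) ≤ ε/48)
    (h6 : (4 + c)^2 ≤ Real.log n) :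
    ((n : ℝ) / Real.log n ^ ((2 : ℝ) + ε)) ^ n ≤ (F0001 n : ℝ) := by
  have hN8 : (8 : ℝ) ≤ (n : ℝ) := by exact_mod_cast h1
  have hNpos : (0:ℝ) < (n:ℝ) := by linarith
  set l : ℝ := Real.log (n:ℝ) with hldef
  have hl64 : 64 ≤ l := h2
  have hlpos : 0 < l := by linarith
  have hl1 : 1 ≤ l := by linarith
  set m : ℝ := Real.log l with hmdef
  have hm1 : 1 ≤ m := le_trans (le_max_left _ _) h3
  have hmδ : 1/δ ≤ m := le_trans (le_trans (le_max_left _ _) (le_max_right _ _)) h3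
  have hmc : 2*c/ε ≤ m := le_trans (le_trans (le_max_right _ _) (le_max_right _ _)) h3
  have hmpos : 0 < m := by linarith
  have hsl : 0 < Real.sqrt l := Real.sqrt_pos.mpr hlpos
  have hm2 : m ≤ 2 * Real.sqrt l := by
    have e : m = 2 * Real.log (Real.sqrt l) := by
      rw [hmdef, Real.log_sqrt (le_of_lt hlpos)]; ring
    have := Real.log_le_sub_one_of_pos hsl
    linarith
  have hsl8 : 8 ≤ Real.sqrt l := by
    have h64 : Real.sqrt 64 ≤ Real.sqrt l := Real.sqrt_le_sqrt hl64
    have he : Real.sqrt 64 = 8 := by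
      rw [show (64:ℝ) = 8^2 by norm_num, Real.sqrt_sq (by norm_num)]
    linarith
  have hsql : Real.sqrt l * Real.sqrt l = l := Real.mul_self_sqrt (le_of_lt hlpos)
  have hml : m ≤ l/4 := by
    have h8 : 8 * Real.sqrt l ≤ Real.sqrt l * Real.sqrt l :=
      mul_le_mul_of_nonneg_right hsl8 (le_of_lt hsl)
    linarith
  have hlN : l ≤ (n:ℝ) := by
    have := Real.log_le_sub_one_of_pos hNpos
    rw [hldef]
    linarith
  -- w and v
  set w : ℝ := δ * (n:ℝ) * m / l with hwdef
  have hwpos : 0 < w := by positivity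
  have hw1 : 1 ≤ w := by
    have hNl : 1 ≤ (n:ℝ) / l := (one_le_div hlpos).mpr hlN
    have e : w = (δ * m) * ((n:ℝ) / l) := by rw [hwdef]; ring
    have hδm : 1 ≤ δ * m := by
      rw [div_le_iff₀ hδpos] at hmδ
      linarith
    have := mul_le_mul hδm hNl (by norm_num) (by linarith)
    rw [e]
    linarith
  set v : ℕ := ⌈w⌉₊ with hvdef
  have hv1 : 1 ≤ v := by
    rw [hvdef]
    exact Nat.one_le_ceil_iff.mpr hwpos
  have hVw : w ≤ (v:ℝ) := Nat.le_ceil w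
  have hV1 : (1:ℝ) ≤ (v:ℝ) := le_trans hw1 hVw
  have hVub : (v:ℝ) ≤ w + 1 := le_of_lt (Nat.ceil_lt_add_one (le_of_lt hwpos))
  have hwN : w ≤ (n:ℝ)/8 := by
    have hmll : m/l ≤ 1/4 := by rw [div_le_iff₀ hlpos]; linarith
    have e : w = δ * (n:ℝ) * (m/l) := by rw [hwdef]; ring
    have h0 : (0:ℝ) ≤ m/l := by positivity
    have s1 : δ * (n:ℝ) * (m/l) ≤ (1/2 * (n:ℝ)) * (1/4) := by
      apply mul_le_mul _ hmll h0
      · positivity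
      · exact mul_le_mul_of_nonneg_right hδhalf (le_of_lt hNpos)
    rw [e]
    linarith
  have hVN : (v:ℝ) ≤ (n:ℝ)/4 := by linarith
  have h2v : 2*v ≤ n := by
    have hr : ((2*v : ℕ) : ℝ) ≤ (n:ℝ) := by push_cast; linarith
    exact_mod_cast hr
  set t : ℕ := n - 2*v with htdef
  have hvvt : v + v + t = n := by omega
  have hT : (t : ℝ) = (n:ℝ) - 2*(v:ℝ) := by
    rw [htdef]
    push_cast [Nat.cast_sub h2v]
    ring
  have hTN2 : (n:ℝ)/2 ≤ (t:ℝ) := by rw [hT]; linarith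
  have ht1 : 1 ≤ t := by
    have h1T : (1:ℝ) ≤ (t:ℝ) := by linarith
    exact_mod_cast h1T
  -- V*V ≥ 2N
  have hl2N : l^2 ≤ (δ^2/2) * (n:ℝ) := by
    rw [div_le_iff₀ hNpos] at h4
    linarith
  have hww : 2*(n:ℝ) ≤ w*w := by
    have hd2N : 2*l^2 ≤ δ^2 * (n:ℝ) := by linarith
    have hmsq : 1 ≤ m^2 := by
      have h' : 1*1 ≤ m*m := mul_le_mul hm1 hm1 (by norm_num) (by linarith)
      have e : m^2 = m*m := sq m
      linarith
    have hstep : δ^2*(n:ℝ) ≤ δ^2*m^2*(n:ℝ) := by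
      have h' : (δ^2*(n:ℝ))*1 ≤ (δ^2*(n:ℝ))*m^2 :=
        mul_le_mul_of_nonneg_left hmsq (by positivity)
      linarith
    have hfin : 2*l^2 ≤ δ^2*m^2*(n:ℝ) := by linarith
    have hmul := mul_le_mul_of_nonneg_right hfin (le_of_lt hNpos)
    have e : w*w = δ^2*m^2*(n:ℝ)*(n:ℝ)/(l*l) := by rw [hwdef]; ring
    rw [e, le_div_iff₀ (by positivity : (0:ℝ) < l*l)]
    ring_nf
    ring_nf at hmul
    linarith
  have hV2 : 2*(n:ℝ) ≤ (v:ℝ)*(v:ℝ) := by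
    have : w*w ≤ (v:ℝ)*(v:ℝ) := mul_le_mul hVw hVw (le_of_lt hwpos) (by linarith)
    linarith
  have htvv : t ≤ v*v := by
    have hr : (t:ℝ) ≤ ((v*v : ℕ) : ℝ) := by
      push_cast
      linarith [hT, hVN]
    exact_mod_cast hr
  -- log V lower bound
  have hlogV : l - m + Real.log δ ≤ Real.log (v:ℝ) := by
    have h1' : Real.log w ≤ Real.log (v:ℝ) :=
      (Real.log_le_log_iff hwpos (by linarith)).mpr hVw
    have h2' : Real.log w = Real.log δ + l + Real.log m - m := by
      rw [hwdef, Real.log_div (by positivity) (ne_of_gt hlpos),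
        Real.log_mul (by positivity) (ne_of_gt hmpos),
        Real.log_mul (ne_of_gt hδpos) (ne_of_gt hNpos)]
      try simp only [← hldef, ← hmdef]
      try ring
    have h3' : 0 ≤ Real.log m := Real.log_nonneg hm1
    linarith
  -- key inequality
  have hkey : 6*(v:ℝ)*l + c*(n:ℝ) ≤ ε*(n:ℝ)*m := by
    have hwl : w*l = δ*(n:ℝ)*m := by
      rw [hwdef]
      field_simp
    have hVl : (v:ℝ)*l ≤ δ*(n:ℝ)*m + l := by
      calc (v:ℝ)*l ≤ (w+1)*l := mul_le_mul_of_nonneg_right hVub (le_of_lt hlpos)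
        _ = w*l + l := by ring
        _ = δ*(n:ℝ)*m + l := by rw [hwl]
    have hδNm : δ*((n:ℝ)*m) ≤ (ε/16)*((n:ℝ)*m) :=
      mul_le_mul_of_nonneg_right hδε (by positivity)
    have hlsq : l ≤ (ε/48)*(n:ℝ) := by
      rw [div_le_iff₀ hNpos] at h5
      have e : l^2 = l*l := sq l
      have h' : l*1 ≤ l*l := mul_le_mul_of_nonneg_left hl1 (le_of_lt hlpos)
      linarith
    have hNle : (n:ℝ) ≤ (n:ℝ)*m := by
      have h' : (n:ℝ)*1 ≤ (n:ℝ)*m := mul_le_mul_of_nonneg_left hm1 (le_of_lt hNpos)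
      linarith
    have hεNle : ε*(n:ℝ) ≤ ε*((n:ℝ)*m) := mul_le_mul_of_nonneg_left hNle (le_of_lt hε)
    have hcN : c*(n:ℝ) ≤ (ε/2)*((n:ℝ)*m) := by
      rw [div_le_iff₀ hε] at hmc
      have h' := mul_le_mul_of_nonneg_right hmc (by positivity : (0:ℝ) ≤ (n:ℝ)/2)
      linarith [h']
    linarith [hVl, hδNm, hlsq, hεNle, hcN]
  -- l - 2m - c ≥ 0
  have hlmc : 0 ≤ l - 2*m - c := by
    have hsl4c : 4 + c ≤ Real.sqrt l := by
      have := Real.sqrt_le_sqrt h6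
      rwa [Real.sqrt_sq (by linarith)] at this
    have e1 : (4+c) * Real.sqrt l ≤ Real.sqrt l * Real.sqrt l :=
      mul_le_mul_of_nonneg_right hsl4c (le_of_lt hsl)
    have e2 : c*1 ≤ c*Real.sqrt l :=
      mul_le_mul_of_nonneg_left (by linarith) (le_of_lt hc)
    linarith [hsql, hm2]
  exact estimate ε δ c n v t hε hδpos hc hcdef hv1 hvvt htvv ht1 hN8 hl1 hm1
    hlogV hVN hV2 hT hkey hlmc

open Filter in
/-- for every `ε > 0`, `F₀₀₀₁(n) ≥ (n/(log n)^{2+ε})ⁿ` for all large `n`. -/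
theorem F0001_lower_bound (ε : ℝ) (hε : 0 < ε) :
    ∃ n₀ : ℕ, ∀ n : ℕ, n₀ ≤ n →
      ((n : ℝ) / Real.log n ^ ((2 : ℝ) + ε)) ^ n ≤ (F0001 n : ℝ) := by
  set δ : ℝ := min (ε/16) (1/2) with hδdef
  have hδpos : 0 < δ := lt_min (by linarith) (by norm_num)
  have hδhalf : δ ≤ 1/2 := min_le_right _ _
  have hδε : δ ≤ ε/16 := min_le_left _ _
  set c : ℝ := Real.log 2 - 2 * Real.log δ with hcdef
  have hc : 0 < c := by
    have h2 : 0 < Real.log 2 := Real.log_pos (by norm_num)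
    have hlogδ : Real.log δ ≤ 0 := Real.log_nonpos (le_of_lt hδpos) (by linarith)
    rw [hcdef]; linarith
  have hlogTop : Tendsto (fun n : ℕ => Real.log n) atTop atTop :=
    Real.tendsto_log_atTop.comp tendsto_natCast_atTop_atTop
  have hmTop : Tendsto (fun n : ℕ => Real.log (Real.log n)) atTop atTop :=
    Real.tendsto_log_atTop.comp hlogTop
  have hsq : Tendsto (fun n : ℕ => Real.log n ^ 2 / (n : ℝ)) atTop (nhds 0) := by
    have h0 := (Real.tendsto_pow_log_div_mul_add_atTop 1 0 2 one_ne_zero).comp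
      tendsto_natCast_atTop_atTop
    simpa [Function.comp_def] using h0
  have E1 : ∀ᶠ n : ℕ in atTop, 8 ≤ n := eventually_ge_atTop 8
  have E2 : ∀ᶠ n : ℕ in atTop, 64 ≤ Real.log n := hlogTop.eventually_ge_atTop 64
  have E3 : ∀ᶠ n : ℕ in atTop, max 1 (max (1/δ) (2*c/ε)) ≤ Real.log (Real.log n) :=
    hmTop.eventually_ge_atTop _
  have E4 : ∀ᶠ n : ℕ in atTop, Real.log n ^ 2 / (n : ℝ) ≤ δ^2/2 :=
    hsq.eventually (eventually_le_nhds (by positivity))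
  have E5 : ∀ᶠ n : ℕ in atTop, Real.log n ^ 2 / (n : ℝ) ≤ ε/48 :=
    hsq.eventually (eventually_le_nhds (by positivity))
  have E6 : ∀ᶠ n : ℕ in atTop, (4 + c)^2 ≤ Real.log n := hlogTop.eventually_ge_atTop _
  have main : ∀ᶠ n : ℕ in atTop,
      ((n : ℝ) / Real.log n ^ ((2 : ℝ) + ε)) ^ n ≤ (F0001 n : ℝ) := by
    filter_upwards [E1, E2, E3, E4, E5, E6] with n h1 h2 h3 h4 h5 h6
    exact pointwise ε δ c hε hδpos hδhalf hδε hcdef hc n h1 h2 h3 h4 h5 h6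
  exact eventually_atTop.mp main
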